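/- arXiv:1010.4530 — 2 statements merged into one kernel-verified Lean document; each statement's English description precedes it below -/
import Mathlib

section
/- Let v : [0,∞) → [0,∞) be continuous and satisfy v(t) ≤ a + b ∫₀^t (t−s)^{−σ} v(s) ds for all t ≥ 0, with a, b ≥ 0 and σ ∈ (0,1). Then there is a constant C₁ depending only on σ such that v(t) ≤ (C₁ a / (1−σ)) · exp( (b Γ(1−σ))^{1/(1−σ)} t ) for all t ≥ 0. -/
open Real MeasureTheory Filter Finset


lemma beta_conv {p q t : ℝ} (hp : 0 < p) (hq : 0 < q) (ht : 0 < t) :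
    ∫ r in (0:ℝ)..t, (t - r) ^ (p - 1) * r ^ (q - 1) =
      Real.Gamma p * Real.Gamma q / Real.Gamma (p + q) * t ^ (p + q - 1) := by
  have hGpos : 0 < Real.Gamma (q + p) := Real.Gamma_pos_of_pos (by linarith)
  have hG : Complex.Gamma ((q : ℂ) + (p : ℂ)) ≠ 0 := by
    rw [show ((q:ℂ) + (p:ℂ)) = ((q + p : ℝ) : ℂ) by push_cast; ring, Complex.Gamma_ofReal]
    exact_mod_cast hGpos.ne'
  have hbeta : Complex.betaIntegral (q:ℂ) (p:ℂ) =
      Complex.Gamma (q:ℂ) * Complex.Gamma (p:ℂ) / Complex.Gamma ((q:ℂ) + (p:ℂ)) := by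
    have h := Complex.Gamma_mul_Gamma_eq_betaIntegral
      (s := (q:ℂ)) (t := (p:ℂ)) (by simpa using hq) (by simpa using hp)
    rw [h]
    field_simp
  have hsc := Complex.betaIntegral_scaled (q:ℂ) (p:ℂ) ht
  have hcast : ((∫ r in (0:ℝ)..t, (t - r) ^ (p - 1) * r ^ (q - 1) : ℝ) : ℂ)
      = ∫ x in (0:ℝ)..t, (x:ℂ) ^ ((q:ℂ) - 1) * ((t:ℂ) - (x:ℂ)) ^ ((p:ℂ) - 1) := by
    rw [← intervalIntegral.integral_ofReal]
    refine intervalIntegral.integral_congr fun x hx => ?_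
    rw [Set.uIcc_of_le ht.le] at hx
    have hx0 : (0:ℝ) ≤ x := hx.1
    have hx1 : (0:ℝ) ≤ t - x := by linarith [hx.2]
    rw [Complex.ofReal_mul, Complex.ofReal_cpow hx1, Complex.ofReal_cpow hx0]
    push_cast
    ring
  rw [hbeta] at hsc
  rw [hsc] at hcast
  have hrhs : ((t:ℂ)) ^ ((q:ℂ) + (p:ℂ) - 1) = ((t ^ (q + p - 1) : ℝ) : ℂ) := by
    rw [Complex.ofReal_cpow ht.le]
    push_cast
    ring_nf
  rw [hrhs, show ((q:ℂ) + (p:ℂ)) = ((q + p : ℝ) : ℂ) by push_cast; ring,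
    Complex.Gamma_ofReal, Complex.Gamma_ofReal, Complex.Gamma_ofReal] at hcast
  have : ((∫ r in (0:ℝ)..t, (t - r) ^ (p - 1) * r ^ (q - 1) : ℝ) : ℂ)
      = ((t ^ (q + p - 1) * (Real.Gamma q * Real.Gamma p / Real.Gamma (q + p)) : ℝ) : ℂ) := by
    rw [hcast]
    push_cast
    ring
  have h2 := Complex.ofReal_inj.mp this
  rw [h2]
  rw [show q + p = p + q by ring]
  ring

lemma Gamma_ge_half {y : ℝ} (h1 : 1 ≤ y) (h2 : y ≤ 2) : (2:ℝ)⁻¹ ≤ Real.Gamma y := by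
  have hy0 : (0:ℝ) < y := by linarith
  have hΓy : 0 < Real.Gamma y := Real.Gamma_pos_of_pos hy0
  rcases eq_or_lt_of_le h2 with rfl | h2'
  · rw [Real.Gamma_two]; norm_num
  · have hs := Real.convexOn_log_Gamma.slope_mono_adjacent
      (x := y) (z := (3:ℝ)) (Set.mem_Ioi.mpr hy0) (Set.mem_Ioi.mpr (by norm_num)) h2' (by norm_num)
    have hΓ3 : Real.Gamma 3 = 2 := by
      rw [show (3:ℝ) = 2 + 1 by norm_num, Real.Gamma_add_one (by norm_num), Real.Gamma_two]
      norm_num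
    simp only [Function.comp_apply, Real.Gamma_two, hΓ3, Real.log_one] at hs
    -- hs : (0 - log (Gamma y)) / (2 - y) ≤ (log 2 - 0) / (3 - 2)
    have h2y : 0 < 2 - y := by linarith
    have hlog2 : 0 ≤ Real.log 2 := Real.log_nonneg (by norm_num)
    have key : -Real.log 2 ≤ Real.log (Real.Gamma y) := by
      have := (div_le_div_iff₀ h2y (by norm_num : (0:ℝ) < 3 - 2)).mp hs
      nlinarith
    calc (2:ℝ)⁻¹ = Real.exp (-Real.log 2) := by
          rw [Real.exp_neg, Real.exp_log]; norm_num
      _ ≤ Real.exp (Real.log (Real.Gamma y)) := Real.exp_le_exp.mpr key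
      _ = Real.Gamma y := Real.exp_log hΓy

lemma Gamma_lb_chord {m : ℕ} (hm : 1 ≤ m) {x : ℝ} (hx1 : (m:ℝ) ≤ x) (hx2 : x ≤ (m:ℝ) + 1) :
    (m.factorial : ℝ) * (m:ℝ) ^ (x - m) ≤ Real.Gamma (x + 1) := by
  obtain ⟨k, rfl⟩ : ∃ k, m = k + 1 := ⟨m - 1, by omega⟩
  have hm0 : (0:ℝ) < ((k:ℝ) + 1) := by positivity
  have hcast : ((k + 1 : ℕ) : ℝ) = (k : ℝ) + 1 := by push_cast; ring
  rw [hcast] at hx1 hx2 ⊢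
  have hfact : Real.Gamma ((k:ℝ) + 1 + 1) = ((k+1).factorial : ℝ) := by
    have := Real.Gamma_nat_eq_factorial (k + 1)
    rw [← this]; norm_num
  have hfact0 : Real.Gamma ((k:ℝ) + 1) = (k.factorial : ℝ) := Real.Gamma_nat_eq_factorial k
  rcases eq_or_lt_of_le hx1 with rfl | hlt
  · rw [sub_self, Real.rpow_zero, mul_one, hfact]
  · have hs := Real.convexOn_log_Gamma.slope_mono_adjacent
      (x := (k:ℝ) + 1) (y := (k:ℝ) + 2) (z := x + 1)
      (Set.mem_Ioi.mpr hm0) (Set.mem_Ioi.mpr (by linarith)) (by linarith) (by linarith)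
    simp only [Function.comp_apply] at hs
    have e1 : Real.Gamma ((k:ℝ) + 2) = ((k+1).factorial : ℝ) := by
      rw [← hfact]; ring_nf
    have e0 : Real.Gamma ((k:ℝ) + 1) = (k.factorial : ℝ) := hfact0
    rw [e1, e0] at hs
    have hfs : ((k+1).factorial : ℝ) = ((k:ℝ) + 1) * (k.factorial : ℝ) := by
      push_cast [Nat.factorial_succ]; ring
    have hkf : (0:ℝ) < (k.factorial : ℝ) := by positivity
    have hlogdiff : Real.log ((k+1).factorial : ℝ) - Real.log (k.factorial : ℝ)
        = Real.log ((k:ℝ) + 1) := by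
      rw [hfs, Real.log_mul (by positivity) hkf.ne']
      ring
    have hden : ((k:ℝ) + 2) - ((k:ℝ) + 1) = 1 := by ring
    have hxk : 0 < x + 1 - ((k:ℝ) + 2) := by linarith
    rw [hden, div_one, hlogdiff] at hs
    have hs2 : Real.log ((k:ℝ)+1) * (x + 1 - ((k:ℝ)+2)) + Real.log ((k+1).factorial : ℝ)
        ≤ Real.log (Real.Gamma (x + 1)) := by
      have h := (le_div_iff₀ hxk).mp hs
      linarith
    have hΓpos : 0 < Real.Gamma (x + 1) := Real.Gamma_pos_of_pos (by linarith)
    calc ((k+1).factorial : ℝ) * ((k:ℝ) + 1) ^ (x - ((k:ℝ)+1))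
        = Real.exp (Real.log ((k+1).factorial : ℝ) + Real.log ((k:ℝ)+1) * (x - ((k:ℝ)+1))) := by
          rw [Real.exp_add, Real.exp_log (by positivity), Real.rpow_def_of_pos hm0]
      _ ≤ Real.exp (Real.log (Real.Gamma (x + 1))) := by
          apply Real.exp_le_exp.mpr
          have : x - ((k:ℝ)+1) = x + 1 - ((k:ℝ)+2) := by ring
          rw [this]
          linarith [hs2]
      _ = Real.Gamma (x + 1) := Real.exp_log hΓpos

noncomputable def Gfun (z : ℝ) (m : ℕ) : ℝ :=
  if m = 0 then 2 * max 1 z else z ^ m / m.factorial + 2 * (z ^ (m+1) / (m+1).factorial)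

lemma Gfun_nonneg {z : ℝ} (hz : 0 ≤ z) (m : ℕ) : 0 ≤ Gfun z m := by
  unfold Gfun
  split
  · positivity
  · positivity

lemma term_le_G {z x : ℝ} (hz : 0 ≤ z) (hx : 0 ≤ x) :
    z ^ x / Real.Gamma (x + 1) ≤ Gfun z ⌊x⌋₊ := by
  set m := ⌊x⌋₊ with hm_def
  have hmx : (m:ℝ) ≤ x := Nat.floor_le hx
  have hxm : x < (m:ℝ) + 1 := Nat.lt_floor_add_one x
  have hΓpos : 0 < Real.Gamma (x+1) := Real.Gamma_pos_of_pos (by linarith)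
  by_cases hm : m = 0
  · have hx1 : x ≤ 1 := by
      rw [hm] at hxm
      push_cast at hxm
      linarith
    have hz1 : z ^ x ≤ max 1 z := by
      rcases le_total z 1 with h | h
      · exact le_trans (Real.rpow_le_one hz h hx) (le_max_left _ _)
      · calc z ^ x ≤ z ^ (1:ℝ) := Real.rpow_le_rpow_of_exponent_le h hx1
          _ = z := Real.rpow_one z
          _ ≤ max 1 z := le_max_right _ _
    have hΓ : (2:ℝ)⁻¹ ≤ Real.Gamma (x+1) := Gamma_ge_half (by linarith) (by linarith)
    rw [Gfun, if_pos hm]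
    calc z ^ x / Real.Gamma (x+1) ≤ max 1 z / 2⁻¹ :=
        div_le_div₀ (le_trans zero_le_one (le_max_left _ _)) hz1 (by norm_num) hΓ
      _ = 2 * max 1 z := by rw [div_eq_mul_inv, inv_inv]; ring
  · have hm1 : 1 ≤ m := Nat.one_le_iff_ne_zero.mpr hm
    have hmpos : (0:ℝ) < (m:ℝ) := by exact_mod_cast hm1
    have hchord := Gamma_lb_chord hm1 hmx hxm.le
    have hfpos : (0:ℝ) < (m.factorial : ℝ) := by positivity
    rw [Gfun, if_neg hm]
    rcases eq_or_lt_of_le hz with rfl | hz0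
    · have hx0 : (0:ℝ) < x := lt_of_lt_of_le hmpos hmx
      rw [Real.zero_rpow hx0.ne', zero_div]
      positivity
    · have hkey : z ^ x / Real.Gamma (x+1) ≤ z ^ m / m.factorial * (z/m) ^ (x - m) := by
        have hub : z ^ x / Real.Gamma (x+1) ≤ z ^ x / ((m.factorial : ℝ) * (m:ℝ) ^ (x - m)) := by
          apply div_le_div_of_nonneg_left (Real.rpow_nonneg hz0.le x) (by positivity) hchord
        refine hub.trans (le_of_eq ?_)
        rw [Real.div_rpow hz0.le hmpos.le]
        rw [show z ^ x = z ^ (m:ℝ) * z ^ (x - m) by rw [← Real.rpow_add hz0]; ring_nf]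
        rw [Real.rpow_natCast]
        field_simp
      rcases le_total z m with hzm | hzm
      · have h1 : (z/m) ^ (x - m) ≤ 1 :=
          Real.rpow_le_one (by positivity) ((div_le_one hmpos).mpr hzm) (by linarith)
        have : z ^ x / Real.Gamma (x+1) ≤ z ^ m / m.factorial := by
          calc z ^ x / Real.Gamma (x+1) ≤ z ^ m / m.factorial * (z/m) ^ (x - m) := hkey
            _ ≤ z ^ m / m.factorial * 1 := by
                apply mul_le_mul_of_nonneg_left h1 (by positivity)
            _ = z ^ m / m.factorial := mul_one _
        refine this.trans (le_add_of_nonneg_right (by positivity))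
      · have h1 : (1:ℝ) ≤ z/m := (one_le_div hmpos).mpr hzm
        have h2 : (z/m) ^ (x - m) ≤ z/m := by
          calc (z/m) ^ (x - m) ≤ (z/m) ^ (1:ℝ) :=
              Real.rpow_le_rpow_of_exponent_le h1 (by linarith)
            _ = z/m := Real.rpow_one _
        have h3 : z ^ x / Real.Gamma (x+1) ≤ z ^ m / m.factorial * (z/m) := by
          calc z ^ x / Real.Gamma (x+1) ≤ z ^ m / m.factorial * (z/m) ^ (x - m) := hkey
            _ ≤ z ^ m / m.factorial * (z/m) := by
                apply mul_le_mul_of_nonneg_left h2 (by positivity)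
        have hm1' : (1:ℝ) ≤ (m:ℝ) := by exact_mod_cast hm1
        have h4 : z ^ m / m.factorial * (z/m) ≤ 2 * (z ^ (m+1) / (m+1).factorial) := by
          have hfs : ((m+1).factorial : ℝ) = ((m:ℝ) + 1) * (m.factorial : ℝ) := by
            push_cast [Nat.factorial_succ]; ring
          have hA : (0:ℝ) ≤ z ^ m * z := by positivity
          have h5 : (1:ℝ)/((m.factorial : ℝ) * (m:ℝ)) ≤ 2/(((m:ℝ)+1) * (m.factorial : ℝ)) := by
            rw [div_le_div_iff₀ (by positivity) (by positivity)]
            nlinarith [hfpos, hm1']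
          calc z ^ m / m.factorial * (z/m)
              = (z ^ m * z) * ((1:ℝ)/((m.factorial : ℝ) * (m:ℝ))) := by ring
            _ ≤ (z ^ m * z) * (2/(((m:ℝ)+1) * (m.factorial : ℝ))) :=
                mul_le_mul_of_nonneg_left h5 hA
            _ = 2 * (z ^ (m+1) / (m+1).factorial) := by rw [hfs, pow_succ]; ring
        exact h3.trans (h4.trans (le_add_of_nonneg_left (by positivity)))

lemma Gfun_sum_le {z : ℝ} (hz : 0 ≤ z) (M : ℕ) :
    ∑ m ∈ range M, Gfun z m ≤ 5 * Real.exp z := by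
  have hmax : max 1 z ≤ Real.exp z :=
    max_le (Real.one_le_exp hz) (by linarith [Real.add_one_le_exp z])
  have hexp0 : (0:ℝ) ≤ Real.exp z := (Real.exp_pos z).le
  have hb : ∀ m ∈ range M, Gfun z m ≤
      (if m = 0 then 2 * max 1 z else 0) + (z^m/m.factorial + 2*(z^(m+1)/(m+1).factorial)) := by
    intro m _
    rcases eq_or_ne m 0 with rfl | hm0
    · simp only [Gfun, if_pos rfl]
      exact le_add_of_nonneg_right (by positivity)
    · simp [Gfun, if_neg hm0]
  calc ∑ m ∈ range M, Gfun z m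
      ≤ ∑ m ∈ range M, ((if m = 0 then 2 * max 1 z else 0)
          + (z^m/m.factorial + 2*(z^(m+1)/(m+1).factorial))) := sum_le_sum hb
    _ = (∑ m ∈ range M, (if m = 0 then 2 * max 1 z else 0))
          + ((∑ m ∈ range M, z^m/m.factorial) + ∑ m ∈ range M, 2*(z^(m+1)/(m+1).factorial)) := by
        rw [sum_add_distrib, sum_add_distrib]
    _ ≤ 2 * Real.exp z + (Real.exp z + 2 * Real.exp z) := by
        gcongr ?_ + (?_ + ?_)
        · rw [Finset.sum_ite_eq' (range M) 0 (fun _ => 2 * max 1 z)]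
          split
          · linarith
          · positivity
        · exact Real.sum_le_exp_of_nonneg hz M
        · rw [← Finset.mul_sum]
          have h1 : ∑ m ∈ range M, z^(m+1)/(m+1).factorial ≤ Real.exp z := by
            have h2 := Finset.sum_range_succ' (fun i => z^i/(i.factorial:ℝ)) M
            have h3 := Real.sum_le_exp_of_nonneg hz (M+1)
            rw [h2] at h3
            simp only [pow_zero, Nat.factorial_zero, Nat.cast_one] at h3
            linarith
          linarith
    _ = 5 * Real.exp z := by ring

lemma sum_terms_le {β z : ℝ} (hβ0 : 0 < β) (hβ1 : β ≤ 1) (hz : 0 ≤ z) (N : ℕ) :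
    ∑ n ∈ range N, z ^ ((n:ℝ)*β) / Real.Gamma ((n:ℝ)*β + 1)
      ≤ (⌈1/β⌉₊ : ℝ) * (5 * Real.exp z) := by
  set K := ⌈1/β⌉₊ with hK_def
  have hKb : 1/β ≤ (K:ℝ) := Nat.le_ceil _
  have step1 : ∑ n ∈ range N, z ^ ((n:ℝ)*β) / Real.Gamma ((n:ℝ)*β + 1)
      ≤ ∑ n ∈ range N, Gfun z ⌊(n:ℝ)*β⌋₊ :=
    sum_le_sum fun n _ => term_le_G hz (by positivity)
  have hmaps : ∀ n ∈ range N, ⌊(n:ℝ)*β⌋₊ ∈ range N := by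
    intro n hn
    rw [mem_range] at hn ⊢
    have h1 : (n:ℝ)*β ≤ (n:ℝ) := by nlinarith [Nat.cast_nonneg (α := ℝ) n]
    have h2 : ⌊(n:ℝ)*β⌋₊ ≤ n := by
      have := Nat.floor_le_floor (R := ℝ) h1
      simpa using this
    omega
  have step2 : ∑ n ∈ range N, Gfun z ⌊(n:ℝ)*β⌋₊
      = ∑ m ∈ range N, ∑ n ∈ (range N).filter (fun n : ℕ => ⌊(n:ℝ)*β⌋₊ = m), Gfun z m := by
    rw [← Finset.sum_fiberwise_of_maps_to hmaps (fun n => Gfun z ⌊(n:ℝ)*β⌋₊)]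
    congr 1
    ext m
    exact Finset.sum_congr rfl fun n hn => by rw [(Finset.mem_filter.mp hn).2]
  have hcard : ∀ m : ℕ, ((range N).filter (fun n : ℕ => ⌊(n:ℝ)*β⌋₊ = m)).card ≤ K := by
    intro m
    set n₀ := ⌈(m:ℝ)/β⌉₊ with hn₀
    have hsub : (range N).filter (fun n : ℕ => ⌊(n:ℝ)*β⌋₊ = m) ⊆ Finset.Ico n₀ (n₀ + K) := by
      intro n hn
      obtain ⟨-, hfl⟩ := Finset.mem_filter.mp hn
      have hmle : (m:ℝ) ≤ (n:ℝ)*β := by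
        rw [← hfl]
        exact_mod_cast Nat.floor_le (mul_nonneg (Nat.cast_nonneg n) hβ0.le)
      have hmlt : (n:ℝ)*β < (m:ℝ) + 1 := by
        rw [← hfl]
        exact_mod_cast Nat.lt_floor_add_one ((n:ℝ)*β)
      rw [Finset.mem_Ico]
      constructor
      · rw [hn₀, Nat.ceil_le]
        rw [div_le_iff₀ hβ0]
        linarith
      · have hlt : (n:ℝ) < (n₀:ℝ) + (K:ℝ) := by
          have h1 : (n:ℝ) < ((m:ℝ) + 1)/β := by
            rw [lt_div_iff₀ hβ0]
            linarith
          have h2 : (m:ℝ)/β ≤ (n₀:ℝ) := Nat.le_ceil _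
          have h3 : ((m:ℝ)+1)/β = (m:ℝ)/β + 1/β := by ring
          linarith
        exact_mod_cast hlt
    calc ((range N).filter (fun n : ℕ => ⌊(n:ℝ)*β⌋₊ = m)).card
        ≤ (Finset.Ico n₀ (n₀ + K)).card := Finset.card_le_card hsub
      _ = K := by rw [Nat.card_Ico]; omega
  have step3 : ∑ m ∈ range N, ∑ n ∈ (range N).filter (fun n : ℕ => ⌊(n:ℝ)*β⌋₊ = m), Gfun z m
      ≤ ∑ m ∈ range N, (K:ℝ) * Gfun z m := by
    apply sum_le_sum
    intro m _
    rw [Finset.sum_const, nsmul_eq_mul]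
    exact mul_le_mul_of_nonneg_right (by exact_mod_cast hcard m) (Gfun_nonneg hz m)
  have step4 : ∑ m ∈ range N, (K:ℝ) * Gfun z m ≤ (K:ℝ) * (5 * Real.exp z) := by
    rw [← Finset.mul_sum]
    exact mul_le_mul_of_nonneg_left (Gfun_sum_le hz N) (by positivity)
  linarith [step1, step2.le, step3, step4, step2.ge]

set_option maxHeartbeats 1000000 in
theorem stmt12 (σ : ℝ) (hσ0 : 0 < σ) (hσ1 : σ < 1) :
    ∃ C₁ > (0 : ℝ), ∀ (v : ℝ → ℝ) (a b : ℝ), 0 ≤ a → 0 ≤ b →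
      ContinuousOn v (Set.Ici 0) → (∀ t ≥ (0 : ℝ), 0 ≤ v t) →
      (∀ t ≥ (0 : ℝ), v t ≤ a + b * ∫ s in (0 : ℝ)..t, (t - s) ^ (-σ) * v s) →
      ∀ t ≥ (0 : ℝ),
        v t ≤ C₁ * a / (1 - σ) *
          Real.exp ((b * Real.Gamma (1 - σ)) ^ (1 / (1 - σ)) * t) := by
  refine ⟨10, by norm_num, ?_⟩
  intro v a b ha hb hcont hvnn hineq t ht
  set β := 1 - σ with hβ_def
  have hβ0 : (0:ℝ) < β := by rw [hβ_def]; linarith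
  have hβ1 : β ≤ 1 := by rw [hβ_def]; linarith
  have hσβ : -σ = β - 1 := by rw [hβ_def]; ring
  have hΓβ : 0 < Real.Gamma β := Real.Gamma_pos_of_pos hβ0
  set c := b * Real.Gamma β with hc_def
  have hc0 : 0 ≤ c := mul_nonneg hb hΓβ.le
  set z := c ^ (1/β) * t with hz_def
  have hz0 : 0 ≤ z := mul_nonneg (Real.rpow_nonneg hc0 _) ht
  have hΓn : ∀ x : ℝ, 0 ≤ x → 0 < Real.Gamma (x + 1) :=
    fun x hx => Real.Gamma_pos_of_pos (by linarith)
  -- maximum of v on [0, t]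
  obtain ⟨x₀, hx₀mem, hx₀max⟩ := isCompact_Icc.exists_isMaxOn (Set.nonempty_Icc.mpr ht)
    (hcont.mono Set.Icc_subset_Ici_self)
  set V := max (v x₀) 0 with hV_def
  have hV0 : (0:ℝ) ≤ V := le_max_right _ _
  have hV : ∀ s ∈ Set.Icc (0:ℝ) t, v s ≤ V := fun s hs => (hx₀max hs).trans (le_max_left _ _)
  -- the key induction
  have claim : ∀ N : ℕ, ∀ s ∈ Set.Icc (0:ℝ) t,
      v s ≤ a * (∑ n ∈ range N, c^n / Real.Gamma ((n:ℝ)*β + 1) * s ^ ((n:ℝ)*β))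
        + c^N / Real.Gamma ((N:ℝ)*β + 1) * s ^ ((N:ℝ)*β) * V := by
    intro N
    induction N with
    | zero =>
      intro s hs
      simpa [Real.Gamma_one] using hV s hs
    | succ N IH =>
      intro s hs
      obtain ⟨hs0, hst⟩ := hs
      rcases eq_or_lt_of_le hs0 with rfl | hs0'
      · -- s = 0
        have h0 : v 0 ≤ a := by simpa using hineq 0 le_rfl
        have hsum0 : ∑ n ∈ range (N+1), c^n / Real.Gamma ((n:ℝ)*β + 1) * (0:ℝ) ^ ((n:ℝ)*β)
            = 1 := by
          rw [Finset.sum_eq_single 0]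
          · simp [Real.Gamma_one]
          · intro n _ hn0
            have hn1 : (0:ℝ) < (n:ℝ)*β := by
              have : 1 ≤ n := Nat.one_le_iff_ne_zero.mpr hn0
              have : (1:ℝ) ≤ (n:ℝ) := by exact_mod_cast this
              nlinarith
            rw [Real.zero_rpow hn1.ne', mul_zero]
          · intro h
            exact absurd (Finset.mem_range.mpr (Nat.succ_pos N)) h
        have hrem : (0:ℝ) ^ (((N+1 : ℕ) : ℝ) * β) = 0 := by
          have hN : (0:ℝ) < ((N+1 : ℕ) : ℝ) := by exact_mod_cast Nat.succ_pos N
          exact Real.zero_rpow (mul_pos hN hβ0).ne'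
        rw [hsum0, hrem]
        simpa using h0
      · -- 0 < s
        have hs0le : (0:ℝ) ≤ s := hs0'.le
        set w : ℕ → ℝ := fun n =>
          if n = N then c^N / Real.Gamma ((N:ℝ)*β + 1) * V
          else a * (c^n / Real.Gamma ((n:ℝ)*β + 1)) with hw_def
        -- kernel integrability
        have hker : IntervalIntegrable (fun r => (s - r) ^ (-σ)) volume 0 s := by
          have h1 : IntervalIntegrable (fun u : ℝ => u ^ (-σ)) volume 0 s :=
            intervalIntegral.intervalIntegrable_rpow' (by linarith)
          have h2 := (h1.comp_sub_left s).symm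
          simpa using h2
        have hrpow_cont : ∀ γ : ℝ, 0 ≤ γ →
            ContinuousOn (fun r : ℝ => r ^ γ) (Set.uIcc (0:ℝ) s) :=
          fun γ hγ => ContinuousOn.rpow_const continuousOn_id (fun x _ => Or.inr hγ)
        have hnβ : ∀ n : ℕ, (0:ℝ) ≤ (n:ℝ)*β := fun n => mul_nonneg (Nat.cast_nonneg n) hβ0.le
        have hint_n : ∀ n : ℕ, IntervalIntegrable
            (fun r => (s - r) ^ (-σ) * (w n * r ^ ((n:ℝ)*β))) volume 0 s := by
          intro n
          exact hker.mul_continuousOn (continuousOn_const.mul (hrpow_cont _ (hnβ n)))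
        have hint_φ : IntervalIntegrable
            (fun r => (s - r) ^ (-σ) * (∑ n ∈ range (N+1), w n * r ^ ((n:ℝ)*β))) volume 0 s := by
          have heq : (fun r => (s - r) ^ (-σ) * (∑ n ∈ range (N+1), w n * r ^ ((n:ℝ)*β)))
              = fun r => ∑ n ∈ range (N+1), (s - r) ^ (-σ) * (w n * r ^ ((n:ℝ)*β)) := by
            funext r
            rw [Finset.mul_sum]
          rw [heq]
          have hs := IntervalIntegrable.sum (μ := volume) (a := 0) (b := s) (range (N+1))
            (f := fun n r => (s - r) ^ (-σ) * (w n * r ^ ((n:ℝ)*β))) fun n _ => hint_n n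
          have hfn : (fun r => ∑ n ∈ range (N+1), (s - r) ^ (-σ) * (w n * r ^ ((n:ℝ)*β)))
              = ∑ n ∈ range (N+1), fun r => (s - r) ^ (-σ) * (w n * r ^ ((n:ℝ)*β)) := by
            funext r
            simp
          rw [hfn]
          exact hs
        have hint_v : IntervalIntegrable (fun r => (s - r) ^ (-σ) * v r) volume 0 s :=
          hker.mul_continuousOn (hcont.mono (by
            rw [Set.uIcc_of_le hs0le]
            exact Set.Icc_subset_Ici_self))
        -- pointwise bound from IH
        have hvφ : ∀ r ∈ Set.Icc (0:ℝ) s,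
            v r ≤ ∑ n ∈ range (N+1), w n * r ^ ((n:ℝ)*β) := by
          intro r hr
          have hIH := IH r ⟨hr.1, hr.2.trans hst⟩
          have hwN : w N = c^N / Real.Gamma ((N:ℝ)*β + 1) * V := by
            simp [hw_def]
          have hwn : ∀ n, n < N → w n = a * (c^n / Real.Gamma ((n:ℝ)*β + 1)) := by
            intro n hn
            simp [hw_def, Nat.ne_of_lt hn]
          have hφr : ∑ n ∈ range (N+1), w n * r ^ ((n:ℝ)*β)
              = a * (∑ n ∈ range N, c^n / Real.Gamma ((n:ℝ)*β + 1) * r ^ ((n:ℝ)*β))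
                + c^N / Real.Gamma ((N:ℝ)*β + 1) * r ^ ((N:ℝ)*β) * V := by
            rw [Finset.sum_range_succ, hwN, Finset.mul_sum]
            have hss : ∑ n ∈ range N, w n * r ^ ((n:ℝ)*β)
                = ∑ n ∈ range N, a * (c^n / Real.Gamma ((n:ℝ)*β + 1) * r ^ ((n:ℝ)*β)) :=
              Finset.sum_congr rfl fun n hn => by
                rw [hwn n (Finset.mem_range.mp hn)]; ring
            rw [hss]
            ring
          rw [hφr]
          exact hIH
        -- monotonicity of the integral
        have hmono : (∫ r in (0:ℝ)..s, (s - r) ^ (-σ) * v r)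
            ≤ ∫ r in (0:ℝ)..s, (s - r) ^ (-σ) * (∑ n ∈ range (N+1), w n * r ^ ((n:ℝ)*β)) := by
          refine intervalIntegral.integral_mono_on hs0le hint_v hint_φ fun r hr => ?_
          have hker0 : (0:ℝ) ≤ (s - r) ^ (-σ) := Real.rpow_nonneg (by linarith [hr.2]) _
          exact mul_le_mul_of_nonneg_left (hvφ r hr) hker0
        -- compute the integral against the polynomial
        have hcomp : (∫ r in (0:ℝ)..s, (s - r) ^ (-σ) * (∑ n ∈ range (N+1), w n * r ^ ((n:ℝ)*β)))
            = ∑ n ∈ range (N+1), w n * (Real.Gamma β * Real.Gamma ((n:ℝ)*β + 1)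
                / Real.Gamma (β + ((n:ℝ)*β + 1)) * s ^ (β + ((n:ℝ)*β + 1) - 1)) := by
          have heq : (fun r => (s - r) ^ (-σ) * (∑ n ∈ range (N+1), w n * r ^ ((n:ℝ)*β)))
              = fun r => ∑ n ∈ range (N+1), (s - r) ^ (-σ) * (w n * r ^ ((n:ℝ)*β)) := by
            funext r
            rw [Finset.mul_sum]
          rw [heq, intervalIntegral.integral_finset_sum (fun n _ => hint_n n)]
          refine Finset.sum_congr rfl fun n _ => ?_
          have heq2 : (fun r => (s - r) ^ (-σ) * (w n * r ^ ((n:ℝ)*β)))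
              = fun r => w n * ((s - r) ^ (β - 1) * r ^ (((n:ℝ)*β + 1) - 1)) := by
            funext r
            rw [hσβ, show ((n:ℝ)*β + 1) - 1 = (n:ℝ)*β by ring]
            ring
          rw [heq2, intervalIntegral.integral_const_mul,
            beta_conv hβ0 (by linarith [hnβ n]) hs0']
        -- put it together
        have hb1 := hineq s hs0le
        have hb2 : v s ≤ a + b * ∑ n ∈ range (N+1), w n * (Real.Gamma β
            * Real.Gamma ((n:ℝ)*β + 1) / Real.Gamma (β + ((n:ℝ)*β + 1))
            * s ^ (β + ((n:ℝ)*β + 1) - 1)) := by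
          rw [← hcomp]
          calc v s ≤ a + b * ∫ r in (0:ℝ)..s, (s - r) ^ (-σ) * v r := hb1
            _ ≤ _ := by
              exact add_le_add_right (mul_le_mul_of_nonneg_left hmono hb) a
        refine hb2.trans (le_of_eq ?_)
        -- final algebraic identity
        rw [Finset.mul_sum, Finset.sum_range_succ,
          Finset.sum_range_succ' (fun i => c^i / Real.Gamma ((i:ℝ)*β + 1) * s ^ ((i:ℝ)*β)) N]
        have hterm : ∀ n : ℕ, n < N →
            b * (w n * (Real.Gamma β * Real.Gamma ((n:ℝ)*β + 1)
              / Real.Gamma (β + ((n:ℝ)*β + 1)) * s ^ (β + ((n:ℝ)*β + 1) - 1)))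
            = a * (c^(n+1) / Real.Gamma (((n+1:ℕ):ℝ)*β + 1) * s ^ (((n+1:ℕ):ℝ)*β)) := by
          intro n hn
          rw [hw_def]
          simp only [if_neg (Nat.ne_of_lt hn)]
          have e1 : ((n+1:ℕ):ℝ)*β + 1 = β + ((n:ℝ)*β + 1) := by push_cast; ring
          have e2 : ((n+1:ℕ):ℝ)*β = β + ((n:ℝ)*β + 1) - 1 := by push_cast; ring
          rw [e1, e2, pow_succ, hc_def]
          have h1 : Real.Gamma ((n:ℝ)*β + 1) ≠ 0 := (hΓn _ (hnβ n)).ne'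
          field_simp
        have htermN :
            b * (w N * (Real.Gamma β * Real.Gamma ((N:ℝ)*β + 1)
              / Real.Gamma (β + ((N:ℝ)*β + 1)) * s ^ (β + ((N:ℝ)*β + 1) - 1)))
            = c^(N+1) / Real.Gamma (((N+1:ℕ):ℝ)*β + 1) * s ^ (((N+1:ℕ):ℝ)*β) * V := by
          rw [hw_def]
          simp only [if_pos rfl, ite_true, eq_self_iff_true]
          have e1 : ((N+1:ℕ):ℝ)*β + 1 = β + ((N:ℝ)*β + 1) := by push_cast; ring
          have e2 : ((N+1:ℕ):ℝ)*β = β + ((N:ℝ)*β + 1) - 1 := by push_cast; ring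
          rw [e1, e2, pow_succ, hc_def]
          have h1 : Real.Gamma ((N:ℝ)*β + 1) ≠ 0 := (hΓn _ (hnβ N)).ne'
          field_simp
        rw [Finset.sum_congr rfl (fun n hn => hterm n (Finset.mem_range.mp hn)), htermN]
        have hzero : c^0 / Real.Gamma (((0:ℕ):ℝ)*β + 1) * s ^ (((0:ℕ):ℝ)*β) = 1 := by
          simp [Real.Gamma_one]
        rw [hzero, mul_add, mul_one, Finset.mul_sum]
        ring
  -- final assembly
  set K := ⌈1/β⌉₊ with hK_def
  have hnβ : ∀ n : ℕ, (0:ℝ) ≤ (n:ℝ)*β := fun n => mul_nonneg (Nat.cast_nonneg n) hβ0.le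
  have hzpow : ∀ n : ℕ, c^n * t ^ ((n:ℝ)*β) = z ^ ((n:ℝ)*β) := by
    intro n
    rw [hz_def, Real.mul_rpow (Real.rpow_nonneg hc0 _) ht]
    have h1 : (c ^ (1/β)) ^ ((n:ℝ)*β) = c ^ (n:ℝ) := by
      rw [← Real.rpow_mul hc0]
      congr 1
      field_simp
    rw [h1, Real.rpow_natCast]
  have hterm_eq : ∀ n : ℕ, c^n / Real.Gamma ((n:ℝ)*β + 1) * t ^ ((n:ℝ)*β)
      = z ^ ((n:ℝ)*β) / Real.Gamma ((n:ℝ)*β + 1) := by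
    intro n
    rw [div_mul_eq_mul_div, hzpow n]
  have hbound : ∀ N : ℕ, v t ≤ a * ((K:ℝ) * (5 * Real.exp z))
      + z ^ ((N:ℝ)*β) / Real.Gamma ((N:ℝ)*β + 1) * V := by
    intro N
    have h1 := claim N t ⟨ht, le_rfl⟩
    have h2 : ∑ n ∈ range N, c^n / Real.Gamma ((n:ℝ)*β + 1) * t ^ ((n:ℝ)*β)
        = ∑ n ∈ range N, z ^ ((n:ℝ)*β) / Real.Gamma ((n:ℝ)*β + 1) :=
      Finset.sum_congr rfl fun n _ => hterm_eq n
    have h3 : c^N / Real.Gamma ((N:ℝ)*β + 1) * t ^ ((N:ℝ)*β)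
        = z ^ ((N:ℝ)*β) / Real.Gamma ((N:ℝ)*β + 1) := hterm_eq N
    rw [h2] at h1
    have h4 : c^N / Real.Gamma ((N:ℝ)*β + 1) * t ^ ((N:ℝ)*β) * V
        = z ^ ((N:ℝ)*β) / Real.Gamma ((N:ℝ)*β + 1) * V := by rw [h3]
    rw [h4] at h1
    refine h1.trans (add_le_add_left ?_ _)
    exact mul_le_mul_of_nonneg_left (sum_terms_le hβ0 hβ1 hz0 N) ha
  -- the remainder tends to zero
  have hG0 : Tendsto (fun m : ℕ => Gfun z m) atTop (nhds 0) := by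
    have ha1 := FloorSemiring.tendsto_pow_div_factorial_atTop (K := ℝ) z
    have ha2 : Tendsto (fun m : ℕ => z^(m+1)/(((m+1).factorial : ℕ):ℝ)) atTop (nhds 0) :=
      ha1.comp (tendsto_add_atTop_nat 1)
    have ha3 : Tendsto (fun m : ℕ => z^m/((m.factorial : ℕ):ℝ)
        + 2*(z^(m+1)/(((m+1).factorial : ℕ):ℝ))) atTop (nhds 0) := by
      have := ha1.add (ha2.const_mul 2)
      simpa using this
    refine ha3.congr' ?_
    filter_upwards [eventually_ge_atTop 1] with m hm
    rw [Gfun, if_neg (by omega)]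
  have hfloor : Tendsto (fun N : ℕ => ⌊(N:ℝ)*β⌋₊) atTop atTop :=
    tendsto_nat_floor_atTop.comp ((tendsto_natCast_atTop_atTop (R := ℝ)).atTop_mul_const hβ0)
  have hq : Tendsto (fun N : ℕ => z ^ ((N:ℝ)*β) / Real.Gamma ((N:ℝ)*β + 1)) atTop (nhds 0) := by
    refine squeeze_zero (fun N => ?_) (fun N => term_le_G hz0 (hnβ N)) (hG0.comp hfloor)
    have := hΓn ((N:ℝ)*β) (hnβ N)
    positivity
  have hlim : Tendsto (fun N : ℕ => a * ((K:ℝ) * (5 * Real.exp z))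
      + z ^ ((N:ℝ)*β) / Real.Gamma ((N:ℝ)*β + 1) * V) atTop
      (nhds (a * ((K:ℝ) * (5 * Real.exp z)))) := by
    have := tendsto_const_nhds (x := a * ((K:ℝ) * (5 * Real.exp z))) (f := atTop (α := ℕ))
    have h2 := this.add ((hq.mul_const V))
    simpa using h2
  have hvt : v t ≤ a * ((K:ℝ) * (5 * Real.exp z)) :=
    ge_of_tendsto hlim (Filter.Eventually.of_forall hbound)
  -- conclude
  have hK2 : (K:ℝ) ≤ 2/β := by
    have h1 : (K:ℝ) < 1/β + 1 := Nat.ceil_lt_add_one (by positivity)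
    have h2 : (1:ℝ) ≤ 1/β := by
      rw [le_div_iff₀ hβ0]
      linarith
    have h3 : 2/β = 1/β + 1/β := by ring
    linarith
  refine hvt.trans ?_
  have hfin : a * ((K:ℝ) * (5 * Real.exp z)) ≤ a * ((2/β) * (5 * Real.exp z)) := by
    have := mul_le_mul_of_nonneg_right hK2 (by positivity : (0:ℝ) ≤ 5 * Real.exp z)
    exact mul_le_mul_of_nonneg_left this ha
  refine hfin.trans (le_of_eq ?_)
  rw [div_mul_eq_mul_div, mul_comm]
  field_simp
  ring
end

section
/- Let β > 0 and define G_β(z) = Σ_{n≥0} z^{nβ} / Γ(nβ + 1) for z ≥ 0. Then the series converges for all z ≥ 0, and there is a constant C (depending on β) such that G_β(z) ≤ C e^z / β for all z ≥ 0. -/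
open Real Finset

lemma one_le_Gamma_aux {y : ℝ} (hy : 2 ≤ y) : 1 ≤ Real.Gamma y := by
  rcases eq_or_lt_of_le hy with h | h
  · rw [← h]; rw [Real.Gamma_two]
  · set μ : ℝ := (y - 2) / (y - 1) with hμdef
    have hy1 : (0:ℝ) < y - 1 := by linarith
    have hμ0 : 0 ≤ μ := div_nonneg (by linarith) (le_of_lt hy1)
    have hμ1 : 0 ≤ 1 - μ := by
      rw [hμdef]; rw [sub_nonneg, div_le_one hy1]; linarith
    have hsum : μ + (1 - μ) = 1 := by ring
    have h1 : (1:ℝ) ∈ Set.Ioi (0:ℝ) := by norm_num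
    have h2 : y ∈ Set.Ioi (0:ℝ) := by simp; linarith
    have hc := Real.convexOn_log_Gamma.2 h1 h2 hμ0 hμ1 hsum
    have hcomb : μ • (1:ℝ) + (1 - μ) • y = 2 := by
      field_simp [hμdef]
      have hμm : μ * (y - 1) = y - 2 := by rw [hμdef]; exact div_mul_cancel₀ _ hy1.ne'
      simp only [smul_eq_mul]; linarith
    rw [hcomb] at hc
    simp only [Function.comp_apply, Real.Gamma_one, Real.Gamma_two, Real.log_one] at hc
    have h1μ : 0 < 1 - μ := by
      rw [hμdef]; rw [sub_pos, div_lt_one hy1]; linarith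
    have hc' : 0 ≤ (1 - μ) * Real.log (Real.Gamma y) := by
      simpa [smul_eq_mul] using hc
    have hlog : 0 ≤ Real.log (Real.Gamma y) := nonneg_of_mul_nonneg_left (by linarith [mul_comm (1-μ) (Real.log (Real.Gamma y))]) h1μ
    have hpos : 0 < Real.Gamma y := Real.Gamma_pos_of_pos (by linarith)
    calc (1:ℝ) = Real.exp 0 := (Real.exp_zero).symm
    _ ≤ Real.exp (Real.log (Real.Gamma y)) := Real.exp_le_exp.mpr hlog
    _ = Real.Gamma y := Real.exp_log hpos

lemma half_le_Gamma_add_one {x : ℝ} (h0 : 0 ≤ x) (h1 : x ≤ 1) :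
    1/2 ≤ Real.Gamma (x + 1) := by
  have hne : x + 1 ≠ 0 := by linarith
  have h2 : Real.Gamma (x + 1 + 1) = (x + 1) * Real.Gamma (x + 1) :=
    Real.Gamma_add_one hne
  have h3 : 1 ≤ Real.Gamma (x + 1 + 1) := one_le_Gamma_aux (by linarith)
  nlinarith [Real.Gamma_pos_of_pos (show (0:ℝ) < x + 1 by linarith)]

lemma Gamma_interp {m : ℕ} (hm : 1 ≤ m) {t : ℝ} (ht0 : 0 ≤ t) (ht1 : t ≤ 1) :
    (m.factorial : ℝ) * (m:ℝ) ^ t ≤ Real.Gamma ((m:ℝ) + 1 + t) := by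
  have hmpos : (0:ℝ) < m := by exact_mod_cast Nat.pos_of_ne_zero (by omega)
  set μ : ℝ := t / (1 + t) with hμdef
  have h1t : (0:ℝ) < 1 + t := by linarith
  have hμ0 : 0 ≤ μ := div_nonneg ht0 (le_of_lt h1t)
  have hμ1 : 0 ≤ 1 - μ := by
    rw [hμdef, sub_nonneg, div_le_one h1t]; linarith
  have hsum : μ + (1 - μ) = 1 := by ring
  have hx1 : (m:ℝ) ∈ Set.Ioi (0:ℝ) := hmpos
  have hx2 : (m:ℝ) + 1 + t ∈ Set.Ioi (0:ℝ) := by simp; linarith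
  have hc := Real.convexOn_log_Gamma.2 hx1 hx2 hμ0 hμ1 hsum
  have hcomb : μ • (m:ℝ) + (1 - μ) • ((m:ℝ) + 1 + t) = (m:ℝ) + 1 := by
    field_simp [hμdef]
    have hμm : μ * (1 + t) = t := by rw [hμdef]; exact div_mul_cancel₀ _ h1t.ne'
    simp only [smul_eq_mul]; linarith
  rw [hcomb] at hc
  simp only [Function.comp_apply, smul_eq_mul] at hc
  -- Gamma (m+1) = m !
  have hfact : Real.Gamma ((m:ℝ) + 1) = (m.factorial : ℝ) := by
    exact_mod_cast Real.Gamma_nat_eq_factorial m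
  have hrec : Real.Gamma ((m:ℝ) + 1) = (m:ℝ) * Real.Gamma (m:ℝ) :=
    Real.Gamma_add_one (ne_of_gt hmpos)
  have hGm : 0 < Real.Gamma (m:ℝ) := Real.Gamma_pos_of_pos hmpos
  have hfpos : (0:ℝ) < (m.factorial : ℝ) := by exact_mod_cast m.factorial_pos
  have hlogGm : Real.log (Real.Gamma (m:ℝ))
      = Real.log (m.factorial : ℝ) - Real.log (m:ℝ) := by
    rw [← hfact, hrec, Real.log_mul (ne_of_gt hmpos) (ne_of_gt hGm)]; ring
  rw [hfact, hlogGm] at hc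
  -- hc : log m! ≤ μ * (log m! - log m) + (1 - μ) * log Γ(c)
  have h1μ : 0 < 1 - μ := by
    rw [hμdef, sub_pos, div_lt_one h1t]; linarith
  have key : Real.log (m.factorial : ℝ) + t * Real.log (m:ℝ)
      ≤ Real.log (Real.Gamma ((m:ℝ) + 1 + t)) := by
    have hμeq : μ * (1 + t) = t := by
      rw [hμdef]; field_simp
    have h1μeq : (1 - μ) * (1 + t) = 1 := by
      rw [hμdef]; field_simp; ring
    have hc2 := mul_le_mul_of_nonneg_right hc (le_of_lt h1t)
    have hexp : (μ * (Real.log (m.factorial:ℝ) - Real.log (m:ℝ))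
        + (1 - μ) * Real.log (Real.Gamma ((m:ℝ) + 1 + t))) * (1 + t)
        = t * (Real.log (m.factorial:ℝ) - Real.log (m:ℝ))
          + Real.log (Real.Gamma ((m:ℝ) + 1 + t)) := by
      have e1 : μ * (Real.log (m.factorial:ℝ) - Real.log (m:ℝ)) * (1 + t)
          = t * (Real.log (m.factorial:ℝ) - Real.log (m:ℝ)) := by
        rw [mul_right_comm, hμeq]
      have e2 : (1 - μ) * Real.log (Real.Gamma ((m:ℝ) + 1 + t)) * (1 + t)
          = Real.log (Real.Gamma ((m:ℝ) + 1 + t)) := by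
        rw [mul_right_comm, h1μeq, one_mul]
      calc _ = μ * (Real.log (m.factorial:ℝ) - Real.log (m:ℝ)) * (1 + t)
            + (1 - μ) * Real.log (Real.Gamma ((m:ℝ) + 1 + t)) * (1 + t) := by ring
      _ = _ := by rw [e1, e2]
    rw [hexp] at hc2
    linarith
  have hGc : 0 < Real.Gamma ((m:ℝ) + 1 + t) := Real.Gamma_pos_of_pos (by simpa using hx2)
  calc (m.factorial : ℝ) * (m:ℝ) ^ t
      = Real.exp (Real.log (m.factorial : ℝ) + t * Real.log (m:ℝ)) := by
        rw [Real.exp_add, Real.exp_log hfpos, Real.rpow_def_of_pos hmpos,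
          mul_comm (Real.log (m:ℝ)) t]
    _ ≤ Real.Gamma ((m:ℝ) + 1 + t) := by
        rw [← Real.exp_log hGc]; exact Real.exp_le_exp.mpr key

lemma term_bound {z x : ℝ} (hz : 0 ≤ z) (hx : 1 ≤ x) :
    z ^ x / Real.Gamma (x + 1) ≤
      z ^ (⌊x⌋₊) / (Nat.factorial ⌊x⌋₊)
        + 2 * z ^ (⌊x⌋₊ + 1) / (Nat.factorial (⌊x⌋₊ + 1)) := by
  set m := ⌊x⌋₊ with hmdef
  have hm1 : 1 ≤ m := Nat.le_floor (by exact_mod_cast hx)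
  have hmx : (m:ℝ) ≤ x := Nat.floor_le (by linarith)
  have hxm : x < m + 1 := Nat.lt_floor_add_one x
  have hmpos : (0:ℝ) < m := by exact_mod_cast Nat.pos_of_ne_zero (by omega)
  set t := x - m with htdef
  have ht0 : 0 ≤ t := by simp [htdef]; linarith
  have ht1 : t ≤ 1 := by simp [htdef]; linarith
  rcases eq_or_lt_of_le hz with hz0 | hzpos
  · rw [← hz0]
    rw [Real.zero_rpow (by positivity : x ≠ 0)]
    rw [zero_div]
    positivity
  · have hG := Gamma_interp hm1 ht0 ht1
    have hxe : x + 1 = (m:ℝ) + 1 + t := by simp [htdef]; ring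
    have hGpos : 0 < (m.factorial : ℝ) * (m:ℝ) ^ t := by positivity
    have step1 : z ^ x / Real.Gamma (x + 1) ≤ z ^ x / ((m.factorial : ℝ) * (m:ℝ) ^ t) := by
      rw [hxe]
      exact div_le_div_of_nonneg_left (Real.rpow_nonneg hz x) hGpos hG
    have hzx : z ^ x = z ^ (m:ℕ) * z ^ t := by
      rw [show x = (m:ℝ) + t by simp [htdef], Real.rpow_add hzpos,
        Real.rpow_natCast]
    have step4 : (z/(m:ℝ)) ^ t ≤ (1-t) + t*(z/(m:ℝ)) := by
      have hw := Real.geom_mean_le_arith_mean2_weighted (sub_nonneg.mpr ht1) ht0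
        zero_le_one (div_nonneg hz (le_of_lt hmpos)) (by ring)
      simpa using hw
    have hzm : (0:ℝ) ≤ z ^ m / m.factorial := by positivity
    have hfact1 : (((m+1).factorial : ℕ) : ℝ) = ((m:ℝ)+1) * m.factorial := by
      rw [Nat.factorial_succ]; push_cast; ring
    have h5 : (z^m / (m.factorial:ℝ)) * ((1-t) + t*(z/(m:ℝ)))
        ≤ z ^ m / m.factorial + 2 * z ^ (m+1) / (m+1).factorial := by
      have e : (z^m / (m.factorial:ℝ)) * ((1-t) + t*(z/(m:ℝ)))
          = (1-t)*(z^m/m.factorial) + t * (z^(m+1) / ((m:ℝ) * m.factorial)) := by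
        field_simp
        ring
      rw [e]
      have hQ : (0:ℝ) ≤ z^(m+1)/((m:ℝ)*m.factorial) := by positivity
      have h6 : (1-t)*(z^m/(m.factorial:ℝ)) ≤ z^m/m.factorial := by nlinarith
      have h7a : t * (z^(m+1) / ((m:ℝ)*m.factorial)) ≤ z^(m+1)/((m:ℝ)*m.factorial) :=
        mul_le_of_le_one_left hQ ht1
      have h7b : z^(m+1)/((m:ℝ)*m.factorial) ≤ 2*z^(m+1)/(((m+1).factorial : ℕ):ℝ) := by
        rw [hfact1, div_le_div_iff₀ (by positivity) (by positivity)]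
        have hm2 : (m:ℝ)+1 ≤ 2*m := by
          have : (1:ℝ) ≤ m := by exact_mod_cast hm1
          linarith
        have hz1 : (0:ℝ) ≤ z^(m+1) := by positivity
        have hf0 : (0:ℝ) < (m.factorial:ℝ) := by positivity
        nlinarith [mul_le_mul_of_nonneg_right hm2 (mul_nonneg hz1 (le_of_lt hf0))]
      linarith
    calc z ^ x / Real.Gamma (x+1)
        ≤ z ^ x / ((m.factorial : ℝ) * (m:ℝ)^t) := step1
      _ = (z^m / (m.factorial:ℝ)) * ((z/(m:ℝ)) ^ t) := by
          rw [hzx, Real.div_rpow hz (le_of_lt hmpos)]; ring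
      _ ≤ (z^m / (m.factorial:ℝ)) * ((1-t) + t*(z/(m:ℝ))) :=
          mul_le_mul_of_nonneg_left step4 hzm
      _ ≤ _ := h5

lemma small_term_bound {z x : ℝ} (hz : 0 ≤ z) (hx0 : 0 ≤ x) (hx1 : x ≤ 1) :
    z ^ x / Real.Gamma (x + 1) ≤ 2 * Real.exp z := by
  have hG := half_le_Gamma_add_one hx0 hx1
  have hnum : z ^ x ≤ Real.exp z := by
    rcases le_or_gt z 1 with h | h
    · calc z^x ≤ 1 := Real.rpow_le_one hz h hx0
        _ ≤ Real.exp z := Real.one_le_exp hz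
    · calc z^x ≤ z^(1:ℝ) := Real.rpow_le_rpow_of_exponent_le (le_of_lt h) hx1
        _ = z := Real.rpow_one z
        _ ≤ Real.exp z := by linarith [Real.add_one_le_exp z]
  calc z^x / Real.Gamma (x+1) ≤ z^x / (1/2) :=
        div_le_div_of_nonneg_left (Real.rpow_nonneg hz x) (by norm_num) hG
    _ = 2 * z^x := by ring
    _ ≤ 2 * Real.exp z := by linarith

lemma finsum_exp_le {z : ℝ} (hz : 0 ≤ z) (u : Finset ℕ) :
    ∑ k ∈ u, z^k / (k.factorial:ℝ) ≤ Real.exp z := by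
  classical
  have hsub : u ⊆ Finset.range (u.sup id + 1) := fun k hk =>
    Finset.mem_range.mpr (Nat.lt_succ_of_le (Finset.le_sup (f := id) hk))
  calc ∑ k ∈ u, z^k / (k.factorial:ℝ)
      ≤ ∑ k ∈ Finset.range (u.sup id + 1), z^k / (k.factorial:ℝ) :=
        Finset.sum_le_sum_of_subset_of_nonneg hsub (by intros; positivity)
    _ ≤ Real.exp z := Real.sum_le_exp_of_nonneg hz _

lemma finsum_exp_le' {z : ℝ} (hz : 0 ≤ z) (u : Finset ℕ) :
    ∑ k ∈ u, z^(k+1) / ((k+1).factorial:ℝ) ≤ Real.exp z := by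
  classical
  have : ∑ k ∈ u, z^(k+1) / ((k+1).factorial:ℝ)
      = ∑ j ∈ u.image (· + 1), z^j / (j.factorial:ℝ) := by
    rw [Finset.sum_image (by intro a _ b _ h; simp only at h; omega)]
  rw [this]
  exact finsum_exp_le hz _

lemma F_sum_le {z : ℝ} (hz : 0 ≤ z) (u : Finset ℕ) :
    ∑ k ∈ u, (z^k / (k.factorial:ℝ) + 2 * z^(k+1) / ((k+1).factorial:ℝ))
      ≤ 3 * Real.exp z := by
  rw [Finset.sum_add_distrib]
  have h2 : ∑ k ∈ u, 2 * z^(k+1) / ((k+1).factorial:ℝ)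
      = 2 * ∑ k ∈ u, z^(k+1) / ((k+1).factorial:ℝ) := by
    rw [Finset.mul_sum]; congr 1; ext k; ring
  rw [h2]
  have := finsum_exp_le hz u
  have := finsum_exp_le' hz u
  linarith

lemma fiber_card {β : ℝ} (hβ : 0 < β) (s : Finset ℕ) (k : ℕ) :
    (s.filter (fun n : ℕ => ⌊(n:ℝ)*β⌋₊ = k)).card ≤ ⌈1/β⌉₊ := by
  classical
  set N := ⌈1/β⌉₊ with hN
  have hN1 : 1 ≤ N := Nat.one_le_ceil_iff.mpr (by positivity)
  set f := s.filter (fun n : ℕ => ⌊(n:ℝ)*β⌋₊ = k) with hf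
  rcases Finset.eq_empty_or_nonempty f with he | hne
  · simp [he]
  · set a := f.min' hne with ha
    have haf : a ∈ f := f.min'_mem hne
    have hsub : f ⊆ Finset.Icc a (a + N - 1) := by
      intro n hn
      have h1 : a ≤ n := f.min'_le n hn
      have hka : (k:ℝ) ≤ (a:ℝ)*β := by
        have := (Finset.mem_filter.mp haf).2
        rw [← this]
        exact Nat.floor_le (by positivity)
      have hkn : (n:ℝ)*β < k + 1 := by
        have h2 := (Finset.mem_filter.mp hn).2
        have := Nat.lt_floor_add_one ((n:ℝ)*β)
        rw [h2] at this
        exact_mod_cast this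
      have hd : ((n:ℝ) - a) * β < 1 := by nlinarith
      have hd2 : ((n:ℝ) - a) < 1/β := by
        rw [lt_div_iff₀ hβ]; exact hd
      have hd3 : ((n:ℝ) - a) < N := lt_of_lt_of_le hd2 (Nat.le_ceil _)
      have hd4 : n - a < N := by
        have : ((n - a : ℕ) : ℝ) < N := by
          rwa [Nat.cast_sub h1]
        exact_mod_cast this
      rw [Finset.mem_Icc]
      exact ⟨h1, by omega⟩
    calc f.card ≤ (Finset.Icc a (a + N - 1)).card := Finset.card_le_card hsub
      _ = a + N - 1 + 1 - a := Nat.card_Icc _ _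
      _ ≤ N := by omega

lemma partial_bound {β : ℝ} (hβ : 0 < β) {z : ℝ} (hz : 0 ≤ z) (s : Finset ℕ) :
    ∑ n ∈ s, z ^ ((n:ℝ)*β) / Real.Gamma ((n:ℝ)*β + 1)
      ≤ (5 * (⌈1/β⌉₊:ℝ)) * Real.exp z := by
  classical
  set N := ⌈1/β⌉₊ with hN
  have hN1 : 1 ≤ N := Nat.one_le_ceil_iff.mpr (by positivity)
  have hNR : (0:ℝ) ≤ (N:ℝ) := by positivity
  set g : ℕ → ℕ := fun n => ⌊(n:ℝ)*β⌋₊ with hg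
  set F : ℕ → ℝ := fun k => z^k/(k.factorial:ℝ) + 2*z^(k+1)/((k+1).factorial:ℝ) with hF
  have hF0 : ∀ k, 0 ≤ F k := by intro k; rw [hF]; positivity
  set p : ℕ → Prop := fun n => (n:ℝ)*β < 1 with hp
  rw [← Finset.sum_filter_add_sum_filter_not s p]
  have bound1 : ∑ n ∈ s.filter p, z ^ ((n:ℝ)*β) / Real.Gamma ((n:ℝ)*β + 1)
      ≤ (N:ℝ) * (2 * Real.exp z) := by
    have hcard : (s.filter p).card ≤ N := by
      have hsub : s.filter p ⊆ Finset.range N := by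
        intro n hn
        have h1 : (n:ℝ)*β < 1 := (Finset.mem_filter.mp hn).2
        have h2 : (n:ℝ) < 1/β := by rw [lt_div_iff₀ hβ]; linarith
        have h3 : (n:ℝ) < N := lt_of_lt_of_le h2 (Nat.le_ceil _)
        exact Finset.mem_range.mpr (by exact_mod_cast h3)
      calc (s.filter p).card ≤ (Finset.range N).card := Finset.card_le_card hsub
        _ = N := Finset.card_range N
    have heach : ∀ n ∈ s.filter p, z ^ ((n:ℝ)*β) / Real.Gamma ((n:ℝ)*β + 1)
        ≤ 2 * Real.exp z := by
      intro n hn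
      have h1 : (n:ℝ)*β < 1 := (Finset.mem_filter.mp hn).2
      exact small_term_bound hz (by positivity) (le_of_lt h1)
    calc ∑ n ∈ s.filter p, z ^ ((n:ℝ)*β) / Real.Gamma ((n:ℝ)*β + 1)
        ≤ (s.filter p).card • (2 * Real.exp z) := Finset.sum_le_card_nsmul _ _ _ heach
      _ = ((s.filter p).card : ℝ) * (2 * Real.exp z) := nsmul_eq_mul _ _
      _ ≤ (N:ℝ) * (2 * Real.exp z) := by
          apply mul_le_mul_of_nonneg_right _ (by positivity)
          exact_mod_cast hcard
  have bound2 : ∑ n ∈ s.filter (fun n => ¬ p n), z ^ ((n:ℝ)*β) / Real.Gamma ((n:ℝ)*β + 1)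
      ≤ (N:ℝ) * (3 * Real.exp z) := by
    set s₂ := s.filter (fun n => ¬ p n) with hs₂
    have step1 : ∑ n ∈ s₂, z ^ ((n:ℝ)*β) / Real.Gamma ((n:ℝ)*β + 1)
        ≤ ∑ n ∈ s₂, F (g n) := by
      apply Finset.sum_le_sum
      intro n hn
      have h1 : 1 ≤ (n:ℝ)*β := by
        have := (Finset.mem_filter.mp hn).2
        simp only [hp, not_lt] at this
        exact this
      exact term_bound hz h1
    have step2 : ∑ n ∈ s₂, F (g n) ≤ (N:ℝ) * (3 * Real.exp z) := by
      calc ∑ n ∈ s₂, F (g n)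
          = ∑ k ∈ s₂.image g, ∑ n ∈ s₂.filter (fun n => g n = k), F k :=
            (Finset.sum_fiberwise_of_maps_to'
              (fun n hn => Finset.mem_image_of_mem g hn) F).symm
        _ = ∑ k ∈ s₂.image g, ((s₂.filter (fun n => g n = k)).card : ℝ) * F k := by
            apply Finset.sum_congr rfl
            intro k _
            rw [Finset.sum_const, nsmul_eq_mul]
        _ ≤ ∑ k ∈ s₂.image g, (N:ℝ) * F k := by
            apply Finset.sum_le_sum
            intro k _
            apply mul_le_mul_of_nonneg_right _ (hF0 k)
            exact_mod_cast fiber_card hβ s₂ k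
        _ = (N:ℝ) * ∑ k ∈ s₂.image g, F k := (Finset.mul_sum _ _ _).symm
        _ ≤ (N:ℝ) * (3 * Real.exp z) :=
            mul_le_mul_of_nonneg_left (F_sum_le hz _) hNR
    exact le_trans step1 step2
  have : (N:ℝ) * (2 * Real.exp z) + (N:ℝ) * (3 * Real.exp z)
      = (5 * (N:ℝ)) * Real.exp z := by ring
  linarith

lemma summable_term {β : ℝ} (hβ : 0 < β) {z : ℝ} (hz : 0 ≤ z) :
    Summable (fun n : ℕ => z ^ ((n:ℝ)*β) / Real.Gamma ((n:ℝ)*β + 1)) := by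
  classical
  set w := max 1 z with hw
  have hw1 : (1:ℝ) ≤ w := le_max_left _ _
  have hwz : z ≤ w := le_max_right _ _
  have hw0 : (0:ℝ) < w := lt_of_lt_of_le one_pos hw1
  have htend := FloorSemiring.tendsto_pow_div_factorial_atTop (K := ℝ) (2*w)
  have hev := htend.eventually (gt_mem_nhds (show (0:ℝ) < 1/(6*w) by positivity))
  obtain ⟨K, hK⟩ := Filter.eventually_atTop.mp hev
  set N := ⌈1/β⌉₊ with hN
  have hN1 : 1 ≤ N := Nat.one_le_ceil_iff.mpr (by positivity)
  have hNβ : (1:ℝ) ≤ (N:ℝ)*β := by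
    have h1 : (1/β : ℝ) ≤ (N:ℝ) := Nat.le_ceil (1/β)
    calc (1:ℝ) = (1/β)*β := by field_simp
      _ ≤ (N:ℝ)*β := mul_le_mul_of_nonneg_right h1 (le_of_lt hβ)
  set n₀ := (K+2)*N with hn₀
  set r := (1/2:ℝ)^β with hr
  have hr0 : (0:ℝ) ≤ r := Real.rpow_nonneg (by norm_num) β
  have hr1 : r < 1 := Real.rpow_lt_one (by norm_num) (by norm_num) hβ
  have hsum : Summable (fun n : ℕ => r^(n + n₀)) :=
    (summable_nat_add_iff n₀).2 (summable_geometric_of_lt_one hr0 hr1)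
  rw [← summable_nat_add_iff n₀]
  apply Summable.of_nonneg_of_le _ _ hsum
  · intro n
    have hG : 0 < Real.Gamma (((n + n₀ : ℕ):ℝ)*β + 1) :=
      Real.Gamma_pos_of_pos (by positivity)
    positivity
  · intro n
    set x := ((n + n₀ : ℕ):ℝ)*β with hx
    have hxK : (K:ℝ) + 2 ≤ x := by
      have h1 : ((n₀:ℕ):ℝ) ≤ ((n + n₀ : ℕ):ℝ) := by exact_mod_cast Nat.le_add_left n₀ n
      have h2 : ((n₀:ℕ):ℝ) = ((K:ℝ)+2)*(N:ℝ) := by rw [hn₀]; push_cast; ring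
      calc (K:ℝ)+2 = ((K:ℝ)+2)*1 := by ring
        _ ≤ ((K:ℝ)+2)*((N:ℝ)*β) := mul_le_mul_of_nonneg_left hNβ (by positivity)
        _ = (((K:ℝ)+2)*(N:ℝ))*β := by ring
        _ = ((n₀:ℕ):ℝ)*β := by rw [← h2]
        _ ≤ x := mul_le_mul_of_nonneg_right h1 (le_of_lt hβ)
    have hx1 : (1:ℝ) ≤ x := by
      have : (0:ℝ) ≤ K := Nat.cast_nonneg K
      linarith
    set m := ⌊x⌋₊ with hm
    have hmK : K + 1 ≤ m := Nat.le_floor (by push_cast; linarith)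
    have hmge : K ≤ m := by omega
    have hm1 : 1 ≤ m := by omega
    have hxm1 : x ≤ (m:ℝ) + 1 := le_of_lt (Nat.lt_floor_add_one x)
    have hterm := term_bound hz hx1
    have hfpos : (0:ℝ) < (m.factorial:ℝ) := by
      exact_mod_cast m.factorial_pos
    have hzw_pow : ∀ k : ℕ, z^k ≤ w^k := fun k => pow_le_pow_left₀ hz hwz k
    have hwmono : w^m ≤ w^(m+1) := pow_le_pow_right₀ hw1 (Nat.le_succ m)
    have hfacmono : (m.factorial:ℝ) ≤ ((m+1).factorial:ℝ) := by
      exact_mod_cast Nat.factorial_le (Nat.le_succ m)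
    have hFle : z ^ m / (m.factorial:ℝ) + 2*z^(m+1)/((m+1).factorial:ℝ)
        ≤ 3 * w^(m+1)/(m.factorial:ℝ) := by
      have a1 : z^m/(m.factorial:ℝ) ≤ w^(m+1)/(m.factorial:ℝ) := by
        apply div_le_div_of_nonneg_right ?_ (le_of_lt hfpos)
        · exact le_trans (hzw_pow m) hwmono
      have a2 : 2*z^(m+1)/((m+1).factorial:ℝ) ≤ 2*w^(m+1)/(m.factorial:ℝ) := by
        apply div_le_div₀ (by positivity) ?_ hfpos hfacmono
        · have := hzw_pow (m+1); linarith
      have e : 3*w^(m+1)/(m.factorial:ℝ)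
          = w^(m+1)/(m.factorial:ℝ) + 2*w^(m+1)/(m.factorial:ℝ) := by ring
      linarith
    have hKm := hK m hmge
    have hhalf : 3*w^(m+1)/(m.factorial:ℝ) ≤ (1/2:ℝ)^(m+1) := by
      have h2m : (0:ℝ) < 2^m := by positivity
      have key : w^m/(m.factorial:ℝ) ≤ 1/(6*w*2^m) := by
        have e1 : (2*w)^m = (2:ℝ)^m * w^m := mul_pow 2 w m
        rw [e1] at hKm
        calc w^m/(m.factorial:ℝ) = ((2:ℝ)^m * w^m/(m.factorial:ℝ))/2^m := by
              field_simp
          _ ≤ (1/(6*w))/2^m := div_le_div_of_nonneg_right (le_of_lt hKm) (le_of_lt h2m)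
          _ = 1/(6*w*2^m) := by rw [div_div]
      calc 3*w^(m+1)/(m.factorial:ℝ) = (3*w)*(w^m/(m.factorial:ℝ)) := by
            rw [pow_succ]; ring
        _ ≤ (3*w)*(1/(6*w*2^m)) := mul_le_mul_of_nonneg_left key (by positivity)
        _ = 1/(2*2^m) := by field_simp; ring
        _ = (1/2:ℝ)^(m+1) := by rw [div_pow, one_pow, pow_succ]; ring
    have hrpow : ((1/2:ℝ))^(m+1) ≤ r^(n+n₀) := by
      have c3 : (1/2:ℝ)^x = r^(n+n₀) := by
        rw [hx, mul_comm ((n+n₀:ℕ):ℝ) β, hr, ← Real.rpow_natCast ((1/2:ℝ)^β) (n+n₀),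
          ← Real.rpow_mul (by norm_num)]
      have c2 : (1/2:ℝ)^(((m+1:ℕ)):ℝ) ≤ (1/2:ℝ)^x :=
        Real.rpow_le_rpow_of_exponent_ge (by norm_num) (by norm_num)
          (by push_cast; linarith)
      rw [← c3, ← Real.rpow_natCast (1/2:ℝ) (m+1)]
      exact_mod_cast c2
    calc z ^ x / Real.Gamma (x + 1)
        ≤ z ^ m / (m.factorial:ℝ) + 2*z^(m+1)/((m+1).factorial:ℝ) := hterm
      _ ≤ 3 * w^(m+1)/(m.factorial:ℝ) := hFle
      _ ≤ (1/2:ℝ)^(m+1) := hhalf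
      _ ≤ r^(n+n₀) := hrpow

theorem stmt17 (β : ℝ) (hβ : 0 < β) :
    (∀ z ≥ (0 : ℝ), Summable (fun n : ℕ => z ^ ((n : ℝ) * β) / Real.Gamma ((n : ℝ) * β + 1))) ∧
      ∃ C > (0 : ℝ), ∀ z ≥ (0 : ℝ),
        (∑' n : ℕ, z ^ ((n : ℝ) * β) / Real.Gamma ((n : ℝ) * β + 1)) ≤
          C * Real.exp z / β := by
  constructor
  · intro z hz
    exact summable_term hβ hz
  · have hNpos : (0:ℝ) < (⌈1/β⌉₊:ℝ) :=
      Nat.cast_pos.mpr (Nat.ceil_pos.mpr (by positivity))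
    refine ⟨5 * (⌈1/β⌉₊:ℝ) * β, by positivity, ?_⟩
    intro z hz
    have hb := Summable.tsum_le_of_sum_le (summable_term hβ hz)
      (fun s => partial_bound hβ hz s)
    have he : 5 * (⌈1/β⌉₊:ℝ) * β * Real.exp z / β
        = (5 * (⌈1/β⌉₊:ℝ)) * Real.exp z := by
      field_simp
    rw [he]
    exact hb
end
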